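/- Continuity of the Denjoy–Wolff point (Heins): if φₙ : 𝔻 → 𝔻 are analytic self-maps converging pointwise to an analytic φ : 𝔻 → 𝔻 which is not the identity map, then the Denjoy–Wolff points λ_{φₙ} converge to λ_φ in the closed disk. -/

import Mathlib

open Metric Filter Topology

/-- `IsDWPoint ψ lam` means `lam` is the (generalized) Denjoy–Wolff point of the analytic
self-map `ψ` of the unit disk: either a fixed point in 𝔻, or a unimodular constant value,
or the boundary attracting point of the iterates. -/
def IsDWPoint (ψ : ℂ → ℂ) (lam : ℂ) : Prop :=
  (lam ∈ ball (0:ℂ) 1 ∧ ψ lam = lam) ∨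
  (lam ∈ sphere (0:ℂ) 1 ∧ ∀ z ∈ ball (0:ℂ) 1, ψ z = lam) ∨
  (lam ∈ sphere (0:ℂ) 1 ∧
    ∀ z ∈ ball (0:ℂ) 1, Tendsto (fun n => ψ^[n] z) atTop (𝓝 lam))

noncomputable section DWaux

local notation "conj'" => (starRingEnd ℂ)

/-- The Möbius involution of the disk swapping `a` and `0`. -/
def mob (a z : ℂ) : ℂ := (a - z) / (1 - conj' a * z)

lemma mob_denom_ne {a z : ℂ} (ha : ‖a‖ < 1) (hz : ‖z‖ ≤ 1) :
    1 - conj' a * z ≠ 0 := by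
  intro h
  have h1 : ‖conj' a * z‖ < 1 := by
    rw [norm_mul, RingHomIsometric.norm_map]
    nlinarith [norm_nonneg z, norm_nonneg a]
  have : (1 : ℂ) = conj' a * z := by linear_combination h
  rw [← this] at h1
  simp at h1

lemma normSq_key (a z : ℂ) :
    ‖1 - conj' a * z‖ ^ 2 - ‖a - z‖ ^ 2 = (1 - ‖a‖ ^ 2) * (1 - ‖z‖ ^ 2) := by
  have h1 := Complex.sq_norm (1 - conj' a * z)
  have h2 := Complex.sq_norm (a - z)
  have h3 := Complex.sq_norm a
  have h4 := Complex.sq_norm z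
  rw [h1, h2, h3, h4]
  simp only [Complex.normSq_apply, Complex.sub_re, Complex.sub_im, Complex.mul_re,
    Complex.mul_im, Complex.one_re, Complex.one_im, Complex.conj_re, Complex.conj_im]
  ring

lemma one_sub_sq_mob {a z : ℂ} (ha : ‖a‖ < 1) (hz : ‖z‖ ≤ 1) :
    1 - ‖mob a z‖ ^ 2 = (1 - ‖a‖ ^ 2) * (1 - ‖z‖ ^ 2) / ‖1 - conj' a * z‖ ^ 2 := by
  have hd : 1 - conj' a * z ≠ 0 := mob_denom_ne ha hz
  have hA : ‖1 - conj' a * z‖ ≠ 0 := norm_ne_zero_iff.mpr hd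
  rw [mob, norm_div, div_pow, ← normSq_key a z]
  rw [one_sub_div (pow_ne_zero 2 hA)]

lemma mob_self (a : ℂ) : mob a a = 0 := by simp [mob]

lemma mob_zero (a : ℂ) : mob a 0 = a := by simp [mob]

lemma conj_mul_ne_one {a : ℂ} (ha : ‖a‖ < 1) : 1 - conj' a * a ≠ 0 := by
  have := mob_denom_ne ha (le_of_lt ha)
  exact this

lemma mob_mob {a z : ℂ} (ha : ‖a‖ < 1) (hz : ‖z‖ ≤ 1) : mob a (mob a z) = z := by
  have hd : 1 - conj' a * z ≠ 0 := mob_denom_ne ha hz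
  have haa : 1 - conj' a * a ≠ 0 := conj_mul_ne_one ha
  have hval : 1 - conj' a * mob a z = (1 - conj' a * a) / (1 - conj' a * z) := by
    rw [mob]; field_simp; ring
  have hnum : a - mob a z = z * ((1 - conj' a * a) / (1 - conj' a * z)) := by
    rw [mob, mul_div_assoc', eq_div_iff hd, sub_mul, div_mul_cancel₀ _ hd]; ring
  have hW : (1 - conj' a * a) / (1 - conj' a * z) ≠ 0 := div_ne_zero haa hd
  rw [mob]
  rw [hval, hnum, mul_div_assoc, div_self hW, mul_one]

lemma norm_mob_lt_one {a z : ℂ} (ha : ‖a‖ < 1) (hz : ‖z‖ < 1) : ‖mob a z‖ < 1 := by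
  have h := one_sub_sq_mob ha hz.le
  have hpos : 0 < (1 - ‖a‖ ^ 2) * (1 - ‖z‖ ^ 2) / ‖1 - conj' a * z‖ ^ 2 := by
    have hA : 0 < ‖1 - conj' a * z‖ := norm_pos_iff.mpr (mob_denom_ne ha hz.le)
    have : 0 < 1 - ‖a‖ ^ 2 := by nlinarith [norm_nonneg a]
    have h2 : 0 < 1 - ‖z‖ ^ 2 := by nlinarith [norm_nonneg z]
    positivity
  nlinarith [norm_nonneg (mob a z)]

lemma norm_mob_eq_one {a z : ℂ} (ha : ‖a‖ < 1) (hz : ‖z‖ = 1) : ‖mob a z‖ = 1 := by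
  have h := one_sub_sq_mob ha hz.le
  rw [hz] at h
  have h2 : 1 - ‖mob a z‖ ^ 2 = 0 := by rw [h]; ring
  have h4 : (‖mob a z‖ - 1) * (‖mob a z‖ + 1) = 0 := by
    linear_combination -h2
  rcases mul_eq_zero.mp h4 with h5 | h5
  · linarith
  · nlinarith [norm_nonneg (mob a z)]

lemma mob_mapsTo {a : ℂ} (ha : ‖a‖ < 1) :
    Set.MapsTo (mob a) (ball (0:ℂ) 1) (ball (0:ℂ) 1) := by
  intro z hz
  rw [mem_ball_zero_iff] at *
  exact norm_mob_lt_one ha hz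

lemma mob_differentiableOn {a : ℂ} (ha : ‖a‖ < 1) :
    DifferentiableOn ℂ (mob a) (ball (0:ℂ) 1) := by
  apply DifferentiableOn.div
  · exact (differentiableOn_const a).sub differentiableOn_id
  · exact (differentiableOn_const 1).sub (differentiableOn_id.const_mul _)
  · intro z hz
    exact mob_denom_ne ha (le_of_lt (mem_ball_zero_iff.mp hz))


/-- Schwarz–Pick lemma. -/
lemma schwarz_pick {f : ℂ → ℂ} (hd : DifferentiableOn ℂ f (ball (0:ℂ) 1))
    (hm : Set.MapsTo f (ball (0:ℂ) 1) (ball (0:ℂ) 1))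
    {a b : ℂ} (ha : a ∈ ball (0:ℂ) 1) (hb : b ∈ ball (0:ℂ) 1) :
    ‖mob (f a) (f b)‖ ≤ ‖mob a b‖ := by
  rw [mem_ball_zero_iff] at ha hb
  have hfa : ‖f a‖ < 1 := mem_ball_zero_iff.mp (hm (mem_ball_zero_iff.mpr ha))
  have h1 : DifferentiableOn ℂ (f ∘ mob a) (ball (0:ℂ) 1) :=
    hd.comp (mob_differentiableOn ha) (mob_mapsTo ha)
  have h1m : Set.MapsTo (f ∘ mob a) (ball (0:ℂ) 1) (ball (0:ℂ) 1) :=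
    hm.comp (mob_mapsTo ha)
  have hgd : DifferentiableOn ℂ (mob (f a) ∘ (f ∘ mob a)) (ball (0:ℂ) 1) :=
    (mob_differentiableOn hfa).comp h1 h1m
  have hgm : Set.MapsTo (mob (f a) ∘ (f ∘ mob a)) (ball (0:ℂ) 1) (ball (0:ℂ) 1) :=
    (mob_mapsTo hfa).comp h1m
  have hg0 : (mob (f a) ∘ (f ∘ mob a)) 0 = 0 := by
    simp only [Function.comp_apply, mob_zero, mob_self]
  have hw : ‖mob a b‖ < 1 := by
    exact norm_mob_lt_one ha hb
  have key := Complex.norm_le_norm_of_mapsTo_ball hgd (hgm.mono_right ball_subset_closedBall) hg0 hw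
  have hgw : (mob (f a) ∘ (f ∘ mob a)) (mob a b) = mob (f a) (f b) := by
    simp only [Function.comp_apply, mob_mob ha hb.le]
  rw [hgw] at key
  exact key

/-- The horocycle/hyperbolic invariance functional. -/
def Gfun (l z : ℂ) : ℝ := ‖l - z‖ ^ 2 / (1 - ‖z‖ ^ 2)

lemma Gfun_nonneg {l z : ℂ} (hz : ‖z‖ < 1) : 0 ≤ Gfun l z := by
  have : 0 < 1 - ‖z‖ ^ 2 := by nlinarith [norm_nonneg z]
  exact div_nonneg (sq_nonneg _) this.le

lemma Gfun_eq {l z : ℂ} (hl : ‖l‖ < 1) (hz : ‖z‖ < 1) :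
    Gfun l z = (1 - ‖l‖ ^ 2) * (‖mob l z‖ ^ 2 / (1 - ‖mob l z‖ ^ 2)) := by
  have hd : 1 - conj' l * z ≠ 0 := mob_denom_ne hl hz.le
  have hA : (0:ℝ) < ‖1 - conj' l * z‖ ^ 2 := by
    have := norm_pos_iff.mpr hd
    positivity
  have h1 : 1 - ‖mob l z‖ ^ 2 = (1 - ‖l‖ ^ 2) * (1 - ‖z‖ ^ 2) / ‖1 - conj' l * z‖ ^ 2 :=
    one_sub_sq_mob hl hz.le
  have h2 : ‖mob l z‖ ^ 2 = ‖l - z‖ ^ 2 / ‖1 - conj' l * z‖ ^ 2 := by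
    rw [mob, norm_div, div_pow]
  have hl2 : 0 < 1 - ‖l‖ ^ 2 := by nlinarith [norm_nonneg l]
  have hz2 : 0 < 1 - ‖z‖ ^ 2 := by nlinarith [norm_nonneg z]
  rw [Gfun, h1, h2]
  have hDne : ‖1 - conj' l * z‖ ^ 2 ≠ 0 := ne_of_gt hA
  set D := ‖1 - conj' l * z‖ ^ 2 with hD
  set A := ‖l - z‖ ^ 2 with hAdef
  set L := ‖l‖ ^ 2 with hL
  set Z := ‖z‖ ^ 2 with hZ
  field_simp

/-- Transfer of pseudo-hyperbolic contraction to `Gfun` contraction (interior center). -/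
lemma Gfun_le_of_mob_le {l z w : ℂ} (hl : ‖l‖ < 1) (hz : ‖z‖ < 1) (hw : ‖w‖ < 1)
    (h : ‖mob l w‖ ≤ ‖mob l z‖) : Gfun l w ≤ Gfun l z := by
  rw [Gfun_eq hl hw, Gfun_eq hl hz]
  have hl2 : 0 < 1 - ‖l‖ ^ 2 := by nlinarith [norm_nonneg l]
  have s1 : ‖mob l w‖ < 1 := norm_mob_lt_one hl hw
  have s2 : ‖mob l z‖ < 1 := norm_mob_lt_one hl hz
  have h0 : 0 ≤ ‖mob l w‖ := norm_nonneg _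
  have key : ‖mob l w‖ ^ 2 / (1 - ‖mob l w‖ ^ 2) ≤ ‖mob l z‖ ^ 2 / (1 - ‖mob l z‖ ^ 2) := by
    have d1 : 0 < 1 - ‖mob l w‖ ^ 2 := by nlinarith
    have d2 : 0 < 1 - ‖mob l z‖ ^ 2 := by nlinarith [norm_nonneg (mob l z)]
    rw [div_le_div_iff₀ d1 d2]
    nlinarith
  nlinarith

lemma norm_one_sub_conj_mul {l w : ℂ} (hl : ‖l‖ = 1) : ‖1 - conj' w * l‖ = ‖l - w‖ := by
  have hll : l * conj' l = 1 := by
    rw [Complex.mul_conj]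
    rw [Complex.normSq_eq_norm_sq, hl]
    norm_num
  have key : 1 - conj' w * l = l * conj' (l - w) := by
    rw [map_sub, mul_sub, hll]; ring
  rw [key, norm_mul, hl, one_mul, RingHomIsometric.norm_map]

lemma iter_mem_ball {f : ℂ → ℂ} (hm : Set.MapsTo f (ball (0:ℂ) 1) (ball (0:ℂ) 1))
    {z : ℂ} (hz : z ∈ ball (0:ℂ) 1) (n : ℕ) : f^[n] z ∈ ball (0:ℂ) 1 := by
  induction n with
  | zero => simpa using hz
  | succ k ih => rw [Function.iterate_succ_apply']; exact hm ih

/-- Julia's lemma at the Denjoy–Wolff point (derived from convergence of the orbit of `0`). -/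
lemma julia {f : ℂ → ℂ} (hd : DifferentiableOn ℂ f (ball (0:ℂ) 1))
    (hm : Set.MapsTo f (ball (0:ℂ) 1) (ball (0:ℂ) 1)) {l : ℂ} (hl : ‖l‖ = 1)
    (horb : Tendsto (fun n => f^[n] 0) atTop (𝓝 l))
    {z : ℂ} (hz : z ∈ ball (0:ℂ) 1) : Gfun l (f z) ≤ Gfun l z := by
  have h0 : (0:ℂ) ∈ ball (0:ℂ) 1 := by simp
  set zs : ℕ → ℂ := fun m => f^[m] 0 with hzsdef
  have hzs : ∀ m, zs m ∈ ball (0:ℂ) 1 := fun m => iter_mem_ball hm h0 m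
  have hzsn : ∀ m, ‖zs m‖ < 1 := fun m => mem_ball_zero_iff.mp (hzs m)
  have hz' : ‖z‖ < 1 := mem_ball_zero_iff.mp hz
  have hfz : ‖f z‖ < 1 := mem_ball_zero_iff.mp (hm hz)
  set a : ℕ → ℝ := fun m => 1 - ‖zs m‖ ^ 2 with hadef
  have ha_pos : ∀ m, 0 < a m := fun m => by
    have := hzsn m; have := norm_nonneg (zs m); simp only [hadef]; nlinarith
  have ha_le : ∀ m, a m ≤ 1 := fun m => by
    have := norm_nonneg (zs m); simp only [hadef]; nlinarith
  -- frequently the orbit does not approach the boundary too fast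
  have freq : ∀ δ : ℝ, 0 < δ → ∃ᶠ m in atTop, a (m + 1) ≤ (1 + δ) * a m := by
    intro δ hδ
    by_contra hcon
    rw [Filter.not_frequently] at hcon
    simp only [not_le] at hcon
    obtain ⟨M, hM⟩ := eventually_atTop.mp hcon
    have grow : ∀ k : ℕ, (1 + δ) ^ k * a M ≤ a (M + k) := by
      intro k
      induction k with
      | zero => simp
      | succ j ih =>
        have h1 : (1 + δ) * a (M + j) < a (M + j + 1) := hM (M + j) (by omega)
        have h2 : (0:ℝ) < 1 + δ := by linarith
        calc (1 + δ) ^ (j + 1) * a M = (1 + δ) * ((1 + δ) ^ j * a M) := by ring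
        _ ≤ (1 + δ) * a (M + j) := by nlinarith
        _ ≤ a (M + j + 1) := h1.le
    have hpow : Tendsto (fun k : ℕ => (1 + δ) ^ k) atTop atTop :=
      tendsto_pow_atTop_atTop_of_one_lt (by linarith)
    obtain ⟨k, hk⟩ := (hpow.eventually_gt_atTop (1 / a M)).exists
    have h3 := grow k
    have h4 := ha_le (M + k)
    have h5 := ha_pos M
    rw [div_lt_iff₀ h5] at hk
    nlinarith
  -- per-step inequality from Schwarz–Pick
  have main : ∀ m, ‖1 - conj' (f z) * zs (m + 1)‖ ^ 2 / (1 - ‖f z‖ ^ 2)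
      ≤ (a (m + 1) / a m) * (‖1 - conj' z * zs m‖ ^ 2 / (1 - ‖z‖ ^ 2)) := by
    intro m
    have sp : ‖mob (f z) (f (zs m))‖ ≤ ‖mob z (zs m)‖ := schwarz_pick hd hm hz (hzs m)
    have hfzs : f (zs m) = zs (m + 1) := (Function.iterate_succ_apply' f m 0).symm
    rw [hfzs] at sp
    have e1 : 1 - ‖mob z (zs m)‖ ^ 2
        = (1 - ‖z‖ ^ 2) * a m / ‖1 - conj' z * zs m‖ ^ 2 := one_sub_sq_mob hz' (hzsn m).le
    have e2 : 1 - ‖mob (f z) (zs (m + 1))‖ ^ 2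
        = (1 - ‖f z‖ ^ 2) * a (m + 1) / ‖1 - conj' (f z) * zs (m + 1)‖ ^ 2 :=
      one_sub_sq_mob hfz (hzsn (m + 1)).le
    have pos1 : (0:ℝ) < ‖1 - conj' z * zs m‖ ^ 2 := by
      have := norm_pos_iff.mpr (mob_denom_ne hz' (hzsn m).le); positivity
    have pos2 : (0:ℝ) < ‖1 - conj' (f z) * zs (m + 1)‖ ^ 2 := by
      have := norm_pos_iff.mpr (mob_denom_ne hfz (hzsn (m + 1)).le); positivity
    have pz : (0:ℝ) < 1 - ‖z‖ ^ 2 := by nlinarith [norm_nonneg z]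
    have pfz : (0:ℝ) < 1 - ‖f z‖ ^ 2 := by nlinarith [norm_nonneg (f z)]
    have pam : 0 < a m := ha_pos m
    have pam1 : 0 < a (m + 1) := ha_pos (m + 1)
    have step : 1 - ‖mob z (zs m)‖ ^ 2 ≤ 1 - ‖mob (f z) (zs (m + 1))‖ ^ 2 := by
      nlinarith [norm_nonneg (mob z (zs m)), norm_nonneg (mob (f z) (zs (m + 1)))]
    rw [e1, e2] at step
    rw [div_le_div_iff₀ pos1 pos2] at step
    rw [div_mul_div_comm, div_le_div_iff₀ pfz (by positivity)]
    nlinarith [step]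
  -- pass to the limit
  have hshift : Tendsto (fun m => zs (m + 1)) atTop (𝓝 l) :=
    horb.comp (tendsto_add_atTop_nat 1)
  have lim1 : Tendsto (fun m => ‖1 - conj' (f z) * zs (m + 1)‖ ^ 2 / (1 - ‖f z‖ ^ 2)) atTop
      (𝓝 (Gfun l (f z))) := by
    have cont : Continuous fun w : ℂ => ‖1 - conj' (f z) * w‖ ^ 2 / (1 - ‖f z‖ ^ 2) := by
      fun_prop
    have := (cont.tendsto l).comp hshift
    have hval : ‖1 - conj' (f z) * l‖ ^ 2 / (1 - ‖f z‖ ^ 2) = Gfun l (f z) := by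
      rw [norm_one_sub_conj_mul hl, Gfun]
    rw [hval] at this
    exact this
  have lim2 : Tendsto (fun m => ‖1 - conj' z * zs m‖ ^ 2 / (1 - ‖z‖ ^ 2)) atTop
      (𝓝 (Gfun l z)) := by
    have cont : Continuous fun w : ℂ => ‖1 - conj' z * w‖ ^ 2 / (1 - ‖z‖ ^ 2) := by
      fun_prop
    have := (cont.tendsto l).comp horb
    have hval : ‖1 - conj' z * l‖ ^ 2 / (1 - ‖z‖ ^ 2) = Gfun l z := by
      rw [norm_one_sub_conj_mul hl, Gfun]
    rw [hval] at this
    exact this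
  -- conclude
  by_contra hAB
  push_neg at hAB
  set A := Gfun l (f z) with hA
  set B := Gfun l z with hB
  have hBnn : 0 ≤ B := Gfun_nonneg hz'
  set ε : ℝ := (A - B) / 4 with hε
  have hεpos : 0 < ε := by simp only [hε]; linarith
  set δ : ℝ := ε / (B + ε + 1) with hδdef
  have hδpos : 0 < δ := by apply div_pos hεpos; linarith
  have ev1 := lim1.eventually (eventually_abs_sub_lt A hεpos)
  have ev2 := lim2.eventually (eventually_abs_sub_lt B hεpos)
  obtain ⟨m, hm1, hm2, hm3⟩ := ((freq δ hδpos).and_eventually (ev1.and ev2)).exists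
  have hmain := main m
  have hratio : a (m + 1) / a m ≤ 1 + δ := by
    rw [div_le_iff₀ (ha_pos m)]
    nlinarith [ha_pos m]
  have hHnn : 0 ≤ ‖1 - conj' z * zs m‖ ^ 2 / (1 - ‖z‖ ^ 2) := by
    have : (0:ℝ) < 1 - ‖z‖ ^ 2 := by nlinarith [norm_nonneg z]
    positivity
  have habs1 := abs_sub_lt_iff.mp hm2
  have habs2 := abs_sub_lt_iff.mp hm3
  have hδe : δ * (B + ε + 1) = ε := by
    rw [hδdef]; field_simp
  nlinarith [hmain, mul_le_mul_of_nonneg_right hratio hHnn,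
    ha_pos m, ha_pos (m + 1)]

lemma dw_mem_closedBall {f : ℂ → ℂ} {l : ℂ} (h : IsDWPoint f l) :
    l ∈ closedBall (0:ℂ) 1 := by
  rcases h with ⟨hl, -⟩ | ⟨hl, -⟩ | ⟨hl, -⟩
  · exact ball_subset_closedBall hl
  · exact sphere_subset_closedBall hl
  · exact sphere_subset_closedBall hl

lemma dw_invariance {f : ℂ → ℂ} (hd : DifferentiableOn ℂ f (ball (0:ℂ) 1))
    (hm : Set.MapsTo f (ball (0:ℂ) 1) (ball (0:ℂ) 1)) {l : ℂ} (hdw : IsDWPoint f l) :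
    ∀ z ∈ ball (0:ℂ) 1, Gfun l (f z) ≤ Gfun l z := by
  intro z hz
  rcases hdw with ⟨hl, hfix⟩ | ⟨hl, hconst⟩ | ⟨hl, horb⟩
  · have sp := schwarz_pick hd hm hl hz
    rw [hfix] at sp
    exact Gfun_le_of_mob_le (mem_ball_zero_iff.mp hl) (mem_ball_zero_iff.mp hz)
      (mem_ball_zero_iff.mp (hm hz)) sp
  · exfalso
    have h1 : f z ∈ ball (0:ℂ) 1 := hm hz
    rw [hconst z hz, mem_ball_zero_iff] at h1
    rw [mem_sphere_zero_iff_norm] at hl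
    linarith
  · exact julia hd hm (mem_sphere_zero_iff_norm.mp hl) (horb 0 (by simp)) hz

lemma mob_sub {a u v : ℂ} (h1 : 1 - conj' a * u ≠ 0) (h2 : 1 - conj' a * v ≠ 0) :
    mob a u - mob a v = (v - u) * (1 - a * conj' a) / ((1 - conj' a * u) * (1 - conj' a * v)) := by
  rw [mob, mob, div_sub_div _ _ h1 h2]
  congr 1
  ring

lemma one_sub_mul_conj (a : ℂ) : 1 - a * conj' a = ((1 - ‖a‖ ^ 2 : ℝ) : ℂ) := by
  rw [Complex.mul_conj, Complex.normSq_eq_norm_sq]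
  push_cast
  ring

lemma norm_one_sub_mul_conj {a : ℂ} (ha : ‖a‖ ≤ 1) : ‖1 - a * conj' a‖ = 1 - ‖a‖ ^ 2 := by
  rw [one_sub_mul_conj, Complex.norm_real, Real.norm_of_nonneg]
  nlinarith [norm_nonneg a]

/-- Transfer of `Gfun` under the Möbius involution. -/
lemma Gfun_mob {L μ u : ℂ} (hL : ‖L‖ < 1) (hμ : ‖μ‖ ≤ 1) (hu : ‖u‖ < 1) :
    Gfun (mob L μ) (mob L u) = Gfun μ u * ((1 - ‖L‖ ^ 2) / ‖1 - conj' L * μ‖ ^ 2) := by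
  have hdμ : 1 - conj' L * μ ≠ 0 := mob_denom_ne hL hμ
  have hdu : 1 - conj' L * u ≠ 0 := mob_denom_ne hL hu.le
  have hnum : ‖mob L μ - mob L u‖ ^ 2
      = ‖μ - u‖ ^ 2 * (1 - ‖L‖ ^ 2) ^ 2 / (‖1 - conj' L * μ‖ ^ 2 * ‖1 - conj' L * u‖ ^ 2) := by
    rw [mob_sub hdμ hdu, norm_div, norm_mul, norm_mul, norm_one_sub_mul_conj hL.le,
      div_pow, mul_pow, mul_pow]
    rw [norm_sub_rev]
  have hden : 1 - ‖mob L u‖ ^ 2 = (1 - ‖L‖ ^ 2) * (1 - ‖u‖ ^ 2) / ‖1 - conj' L * u‖ ^ 2 :=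
    one_sub_sq_mob hL hu.le
  have p1 : (0:ℝ) < ‖1 - conj' L * μ‖ ^ 2 := by
    have := norm_pos_iff.mpr hdμ; positivity
  have p2 : (0:ℝ) < ‖1 - conj' L * u‖ ^ 2 := by
    have := norm_pos_iff.mpr hdu; positivity
  have p3 : (0:ℝ) < 1 - ‖L‖ ^ 2 := by nlinarith [norm_nonneg L]
  have p4 : (0:ℝ) < 1 - ‖u‖ ^ 2 := by nlinarith [norm_nonneg u]
  rw [Gfun, Gfun, hnum, hden]
  set D1 := ‖1 - conj' L * μ‖ ^ 2
  set D2 := ‖1 - conj' L * u‖ ^ 2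
  set P := ‖μ - u‖ ^ 2
  set Q := (1:ℝ) - ‖L‖ ^ 2
  set R := (1:ℝ) - ‖u‖ ^ 2
  field_simp

/-- If the `dslope` is strictly contracting on the disk, iterates tend to `0`. -/
lemma iter_tendsto_zero {g : ℂ → ℂ} (hd : DifferentiableOn ℂ g (ball (0:ℂ) 1))
    (hg0 : g 0 = 0)
    (hstrict : ∀ w ∈ ball (0:ℂ) 1, ‖dslope g 0 w‖ < 1)
    {w : ℂ} (hw : w ∈ ball (0:ℂ) 1) :
    Tendsto (fun n => g^[n] w) atTop (𝓝 0) := by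
  have hs : ‖w‖ < 1 := mem_ball_zero_iff.mp hw
  set s := ‖w‖ with hsdef
  have hs0 : 0 ≤ s := norm_nonneg w
  have hsub : closedBall (0:ℂ) s ⊆ ball (0:ℂ) 1 := closedBall_subset_ball hs
  have hdiff : DifferentiableOn ℂ (dslope g 0) (ball (0:ℂ) 1) :=
    (Complex.differentiableOn_dslope (isOpen_ball.mem_nhds (by simp))).mpr hd
  have hcont : ContinuousOn (norm ∘ dslope g 0) (closedBall (0:ℂ) s) :=
    (hdiff.continuousOn.mono hsub).norm
  have hne : (closedBall (0:ℂ) s).Nonempty := ⟨0, by simp [hs0]⟩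
  obtain ⟨u0, hu0mem, hu0max⟩ := (isCompact_closedBall (0:ℂ) s).exists_isMaxOn hne hcont
  set k := ‖dslope g 0 u0‖ with hkdef
  have hk1 : k < 1 := hstrict u0 (hsub hu0mem)
  have hk0 : 0 ≤ k := norm_nonneg _
  have hbound : ∀ u ∈ closedBall (0:ℂ) s, ‖g u‖ ≤ k * ‖u‖ := by
    intro u hu
    rcases eq_or_ne u 0 with rfl | hne0
    · simp [hg0]
    · have hds : dslope g 0 u = g u / u := by
        rw [dslope_of_ne g hne0, slope_def_field]
        simp [hg0]
      have hgu : g u = dslope g 0 u * u := by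
        rw [hds, div_mul_cancel₀ _ hne0]
      rw [hgu, norm_mul]
      exact mul_le_mul_of_nonneg_right (hu0max hu) (norm_nonneg u)
  have hiter : ∀ n : ℕ, ‖g^[n] w‖ ≤ k ^ n * s ∧ g^[n] w ∈ closedBall (0:ℂ) s := by
    intro n
    induction n with
    | zero => simp [hsdef]
    | succ j ih =>
      obtain ⟨ih1, ih2⟩ := ih
      have hb := hbound _ ih2
      rw [Function.iterate_succ_apply']
      constructor
      · calc ‖g (g^[j] w)‖ ≤ k * ‖g^[j] w‖ := hb
        _ ≤ k * (k ^ j * s) := by nlinarith [norm_nonneg (g^[j] w)]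
        _ = k ^ (j + 1) * s := by ring
      · rw [mem_closedBall_zero_iff]
        have hk2 : k ^ (j + 1) ≤ 1 := pow_le_one₀ hk0 hk1.le
        calc ‖g (g^[j] w)‖ ≤ k ^ (j + 1) * s := by
              calc ‖g (g^[j] w)‖ ≤ k * ‖g^[j] w‖ := hb
              _ ≤ k * (k ^ j * s) := by nlinarith [norm_nonneg (g^[j] w)]
              _ = k ^ (j + 1) * s := by ring
        _ ≤ s := by nlinarith
  rw [tendsto_zero_iff_norm_tendsto_zero]
  have hlim : Tendsto (fun n : ℕ => k ^ n * s) atTop (𝓝 0) := by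
    have := (tendsto_pow_atTop_nhds_zero_of_lt_one hk0 hk1).mul_const s
    simpa using this
  exact squeeze_zero (fun n => norm_nonneg _) (fun n => (hiter n).1) hlim

lemma iter_invariance {φ : ℂ → ℂ} (hm : Set.MapsTo φ (ball (0:ℂ) 1) (ball (0:ℂ) 1)) {μ : ℂ}
    (hinv : ∀ z ∈ ball (0:ℂ) 1, Gfun μ (φ z) ≤ Gfun μ z) :
    ∀ n : ℕ, ∀ z ∈ ball (0:ℂ) 1, Gfun μ (φ^[n] z) ≤ Gfun μ z := by
  intro n
  induction n with
  | zero => intro z hz; simp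
  | succ j ih =>
    intro z hz
    rw [Function.iterate_succ_apply']
    calc Gfun μ (φ (φ^[j] z)) ≤ Gfun μ (φ^[j] z) := hinv _ (iter_mem_ball hm hz j)
    _ ≤ Gfun μ z := ih z hz

lemma tendsto_Gfun {μ l : ℂ} {u : ℕ → ℂ} (hu : Tendsto u atTop (𝓝 l)) (hl : ‖l‖ < 1) :
    Tendsto (fun n => Gfun μ (u n)) atTop (𝓝 (Gfun μ l)) := by
  have hc : ContinuousAt (fun w : ℂ => Gfun μ w) l := by
    apply ContinuousAt.div
    · fun_prop
    · fun_prop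
    · nlinarith [norm_nonneg l]
  exact hc.tendsto.comp hu

lemma continuousAt_mob_zero {L : ℂ} (hL : ‖L‖ < 1) : ContinuousAt (mob L) 0 := by
  apply ContinuousAt.div
  · fun_prop
  · fun_prop
  · simpa using mob_denom_ne hL (by norm_num : ‖(0:ℂ)‖ ≤ 1)

lemma Gfun_scalar {μ : ℂ} (hμ : ‖μ‖ = 1) {r : ℝ} (h0 : 0 ≤ r) (h1 : r < 1) :
    Gfun μ ((r : ℂ) * μ) = (1 - r) ^ 2 / (1 - r ^ 2) := by
  have e1 : μ - (r : ℂ) * μ = ((1 - r : ℝ) : ℂ) * μ := by push_cast; ring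
  rw [Gfun, e1, norm_mul, norm_mul, hμ, Complex.norm_real, Complex.norm_real,
    Real.norm_of_nonneg (by linarith), Real.norm_of_nonneg h0]
  ring_nf

lemma exists_horocycle_radius {δ : ℝ} (hδ : 0 < δ) :
    ∃ r : ℝ, 0 ≤ r ∧ r < 1 ∧ (1 - r) ^ 2 / (1 - r ^ 2) < δ := by
  have hminpos : 0 < min δ 1 := lt_min hδ one_pos
  have hmin1 : min δ 1 ≤ 1 := min_le_right _ _
  have hminδ : min δ 1 ≤ δ := min_le_left _ _
  have key : ∀ r : ℝ, 1/2 ≤ r → r < 1 → 1 - r < δ → (1 - r) ^ 2 / (1 - r ^ 2) < δ := by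
    intro r h1 h2 h3
    have hpos : (0:ℝ) < 1 - r ^ 2 := by nlinarith
    have h4 : (1 - r) ^ 2 / (1 - r ^ 2) ≤ 1 - r := by
      rw [div_le_iff₀ hpos]; nlinarith
    linarith
  exact ⟨1 - min δ 1 / 2, by linarith, by linarith,
    key _ (by linarith) (by linarith) (by linarith)⟩

lemma gfun_blowup {φ : ℂ → ℂ} (hm : Set.MapsTo φ (ball (0:ℂ) 1) (ball (0:ℂ) 1))
    {μ L : ℂ} (hμ : ‖μ‖ = 1) (hL : ‖L‖ = 1) (hμL : μ ≠ L)
    (horb : Tendsto (fun n => φ^[n] 0) atTop (𝓝 L))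
    (hinv : ∀ z ∈ ball (0:ℂ) 1, Gfun μ (φ z) ≤ Gfun μ z) : False := by
  have h0 : (0:ℂ) ∈ ball (0:ℂ) 1 := by simp
  have hiter := iter_invariance hm hinv
  have hG0 : Gfun μ 0 = 1 := by simp [Gfun, hμ]
  have hnum : Tendsto (fun n => ‖μ - φ^[n] 0‖ ^ 2) atTop (𝓝 (‖μ - L‖ ^ 2)) := by
    have hc : Continuous fun w : ℂ => ‖μ - w‖ ^ 2 := by fun_prop
    exact (hc.tendsto L).comp horb
  have hden : Tendsto (fun n => 1 - ‖φ^[n] 0‖ ^ 2) atTop (𝓝 0) := by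
    have hc : Continuous fun w : ℂ => 1 - ‖w‖ ^ 2 := by fun_prop
    have := (hc.tendsto L).comp horb
    simpa [hL, Function.comp_def] using this
  have hcpos : (0:ℝ) < ‖μ - L‖ ^ 2 := by
    have : μ - L ≠ 0 := sub_ne_zero.mpr hμL
    have := norm_pos_iff.mpr this
    positivity
  have ev1 : ∀ᶠ n in atTop, ‖μ - L‖ ^ 2 / 2 < ‖μ - φ^[n] 0‖ ^ 2 :=
    hnum.eventually_const_lt (by linarith)
  have ev2 : ∀ᶠ n in atTop, 1 - ‖φ^[n] 0‖ ^ 2 < ‖μ - L‖ ^ 2 / 2 :=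
    hden.eventually_lt_const (by linarith)
  obtain ⟨n, hn1, hn2⟩ := (ev1.and ev2).exists
  have hmem : φ^[n] 0 ∈ ball (0:ℂ) 1 := iter_mem_ball hm h0 n
  have hdpos : (0:ℝ) < 1 - ‖φ^[n] 0‖ ^ 2 := by
    have := mem_ball_zero_iff.mp hmem; nlinarith [norm_nonneg (φ^[n] 0)]
  have hgt : 1 < Gfun μ (φ^[n] 0) := by
    rw [Gfun, lt_div_iff₀ hdpos]
    nlinarith
  have hle := hiter n 0 h0
  rw [hG0] at hle
  linarith

lemma dw_unique {φ : ℂ → ℂ} (hd : DifferentiableOn ℂ φ (ball (0:ℂ) 1))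
    (hm : Set.MapsTo φ (ball (0:ℂ) 1) (ball (0:ℂ) 1))
    (hne : ¬ ∀ z ∈ ball (0:ℂ) 1, φ z = z)
    {L : ℂ} (hdw : IsDWPoint φ L)
    {μ : ℂ} (hμ : μ ∈ closedBall (0:ℂ) 1)
    (hinv : ∀ z ∈ ball (0:ℂ) 1, Gfun μ (φ z) ≤ Gfun μ z) : μ = L := by
  rw [mem_closedBall_zero_iff] at hμ
  rcases lt_or_eq_of_le hμ with hμlt | hμeq
  · -- μ is interior: it is a fixed point of φ
    have hμball : μ ∈ ball (0:ℂ) 1 := mem_ball_zero_iff.mpr hμlt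
    have hfixμ : φ μ = μ := by
      have h1 := hinv μ hμball
      have h2 : Gfun μ μ = 0 := by simp [Gfun]
      rw [h2] at h1
      have h3 : 0 ≤ Gfun μ (φ μ) := Gfun_nonneg (mem_ball_zero_iff.mp (hm hμball))
      have h4 : Gfun μ (φ μ) = 0 := le_antisymm h1 h3
      have h5 : (0:ℝ) < 1 - ‖φ μ‖ ^ 2 := by
        have := mem_ball_zero_iff.mp (hm hμball); nlinarith [norm_nonneg (φ μ)]
      rw [Gfun, div_eq_zero_iff] at h4
      rcases h4 with h4 | h4
      · have h6 : ‖μ - φ μ‖ = 0 := by nlinarith [norm_nonneg (μ - φ μ)]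
        have h7 : μ - φ μ = 0 := norm_eq_zero.mp h6
        have h8 := sub_eq_zero.mp h7
        exact h8.symm
      · linarith
    rcases hdw with ⟨hL, hfixL⟩ | ⟨hL, hconst⟩ | ⟨hL, horb⟩
    · -- both fixed points: equal, else φ = id
      by_contra hμL
      apply hne
      have hLn : ‖L‖ < 1 := mem_ball_zero_iff.mp hL
      -- conjugate: g := mob L ∘ φ ∘ mob L fixes 0 and m := mob L μ ≠ 0 with ‖g m‖ = ‖m‖
      set g : ℂ → ℂ := fun w => mob L (φ (mob L w)) with hgdef
      have h1 : DifferentiableOn ℂ (φ ∘ mob L) (ball (0:ℂ) 1) :=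
        hd.comp (mob_differentiableOn hLn) (mob_mapsTo hLn)
      have h1m : Set.MapsTo (φ ∘ mob L) (ball (0:ℂ) 1) (ball (0:ℂ) 1) :=
        hm.comp (mob_mapsTo hLn)
      have hgd : DifferentiableOn ℂ (mob L ∘ (φ ∘ mob L)) (ball (0:ℂ) 1) :=
        (mob_differentiableOn hLn).comp h1 h1m
      have hgm : Set.MapsTo (mob L ∘ (φ ∘ mob L)) (ball (0:ℂ) 1) (ball (0:ℂ) 1) :=
        (mob_mapsTo hLn).comp h1m
      have hg0 : (mob L ∘ (φ ∘ mob L)) 0 = 0 := by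
        simp only [Function.comp_apply, mob_zero, hfixL, mob_self]
      set m : ℂ := mob L μ with hmdef
      have hmball : m ∈ ball (0:ℂ) 1 := mem_ball_zero_iff.mpr (norm_mob_lt_one hLn hμlt)
      have hmne : m ≠ 0 := by
        intro h
        apply hμL
        have h2 := mob_mob hLn hμ
        rw [← hmdef, h, mob_zero] at h2
        exact h2.symm
      have hgm_eq : (mob L ∘ (φ ∘ mob L)) m = m := by
        simp only [Function.comp_apply, hmdef, mob_mob hLn hμ, hfixμ]
      have hds : ‖dslope (mob L ∘ (φ ∘ mob L)) 0 m‖ = 1 := by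
        rw [dslope_of_ne _ hmne, slope_def_field, hgm_eq, hg0]
        simp [div_self, hmne]
      have hmaps' : Set.MapsTo (mob L ∘ (φ ∘ mob L)) (ball (0:ℂ) 1)
          (ball ((mob L ∘ (φ ∘ mob L)) 0) 1) := by rw [hg0]; exact hgm
      have haff := Complex.affine_of_mapsTo_ball_of_exists_norm_dslope_eq_div hgd (hmaps'.mono_right ball_subset_closedBall)
        hmball (by rw [hds]; norm_num)
      -- g z = z * C with C = dslope ... m; evaluating at m gives C = 1
      set C := dslope (mob L ∘ (φ ∘ mob L)) 0 m with hCdef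
      have haffm := haff hmball
      simp only [hg0, smul_eq_mul, sub_zero, zero_add] at haffm
      -- haffm : (mob L ∘ (φ ∘ mob L)) m = m * C
      rw [hgm_eq] at haffm
      have hC1 : C = 1 := by
        have h : m * 1 = m * C := by rw [mul_one]; exact haffm
        exact (mul_left_cancel₀ hmne h).symm
      intro z hz
      have hz' : ‖z‖ < 1 := mem_ball_zero_iff.mp hz
      have hmz : mob L z ∈ ball (0:ℂ) 1 := mem_ball_zero_iff.mpr (norm_mob_lt_one hLn hz')
      have haffz := haff hmz
      simp only [hg0, smul_eq_mul, sub_zero, zero_add, ← hCdef, hC1, mul_one] at haffz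
      have h4 : (mob L ∘ (φ ∘ mob L)) (mob L z) = mob L (φ z) := by
        simp only [Function.comp_apply, mob_mob hLn hz'.le]
      rw [h4] at haffz
      have h5 := congrArg (mob L) haffz
      rw [mob_mob hLn (mem_ball_zero_iff.mp (hm hz)).le, mob_mob hLn hz'.le] at h5
      exact h5
    · exfalso
      have h1 : φ μ ∈ ball (0:ℂ) 1 := hm hμball
      rw [hconst μ hμball, mem_ball_zero_iff] at h1
      rw [mem_sphere_zero_iff_norm] at hL
      linarith
    · -- orbit of the fixed point μ converges to L
      have h1 : ∀ n : ℕ, φ^[n] μ = μ := by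
        intro n
        induction n with
        | zero => simp
        | succ j ih => rw [Function.iterate_succ_apply', ih, hfixμ]
      have h2 := horb μ hμball
      simp only [h1] at h2
      exact tendsto_nhds_unique tendsto_const_nhds h2
  · -- μ is on the boundary
    rcases hdw with ⟨hL, hfixL⟩ | ⟨hL, hconst⟩ | ⟨hL, horb⟩
    · -- L is an interior fixed point: contradiction
      exfalso
      have hLn : ‖L‖ < 1 := mem_ball_zero_iff.mp hL
      have h1 : DifferentiableOn ℂ (φ ∘ mob L) (ball (0:ℂ) 1) :=
        hd.comp (mob_differentiableOn hLn) (mob_mapsTo hLn)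
      have h1m : Set.MapsTo (φ ∘ mob L) (ball (0:ℂ) 1) (ball (0:ℂ) 1) :=
        hm.comp (mob_mapsTo hLn)
      have hgd : DifferentiableOn ℂ (mob L ∘ (φ ∘ mob L)) (ball (0:ℂ) 1) :=
        (mob_differentiableOn hLn).comp h1 h1m
      have hgm : Set.MapsTo (mob L ∘ (φ ∘ mob L)) (ball (0:ℂ) 1) (ball (0:ℂ) 1) :=
        (mob_mapsTo hLn).comp h1m
      have hg0 : (mob L ∘ (φ ∘ mob L)) 0 = 0 := by
        simp only [Function.comp_apply, mob_zero, hfixL, mob_self]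
      have hmaps' : Set.MapsTo (mob L ∘ (φ ∘ mob L)) (ball (0:ℂ) 1)
          (ball ((mob L ∘ (φ ∘ mob L)) 0) 1) := by rw [hg0]; exact hgm
      -- key conjugation identity
      have hconj : ∀ u ∈ ball (0:ℂ) 1, φ (mob L u) = mob L ((mob L ∘ (φ ∘ mob L)) u) := by
        intro u hu
        have hu' : ‖u‖ < 1 := mem_ball_zero_iff.mp hu
        have hmem : mob L u ∈ ball (0:ℂ) 1 := mem_ball_zero_iff.mpr (norm_mob_lt_one hLn hu')
        have : (mob L ∘ (φ ∘ mob L)) u = mob L (φ (mob L u)) := rfl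
        rw [this, mob_mob hLn (mem_ball_zero_iff.mp (hm hmem)).le]
      have hdsb : ∀ w ∈ ball (0:ℂ) 1, ‖dslope (mob L ∘ (φ ∘ mob L)) 0 w‖ ≤ 1 := by
        intro w hw
        have := Complex.norm_dslope_le_div_of_mapsTo_ball hgd (hmaps'.mono_right ball_subset_closedBall) hw
        simpa using this
      by_cases hex : ∃ w ∈ ball (0:ℂ) 1, ‖dslope (mob L ∘ (φ ∘ mob L)) 0 w‖ = 1
      · -- rotation case
        obtain ⟨w, hwmem, hweq⟩ := hex
        have haff := Complex.affine_of_mapsTo_ball_of_exists_norm_dslope_eq_div hgd (hmaps'.mono_right ball_subset_closedBall)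
          hwmem (by rw [hweq]; norm_num)
        set C := dslope (mob L ∘ (φ ∘ mob L)) 0 w with hCdef
        have hCnorm : ‖C‖ = 1 := hweq
        have hgeq : ∀ u ∈ ball (0:ℂ) 1, (mob L ∘ (φ ∘ mob L)) u = C * u := by
          intro u hu
          have h2 := haff hu
          simp only [hg0, smul_eq_mul, sub_zero, zero_add] at h2
          rw [h2]; ring
        have hCne1 : C ≠ 1 := by
          intro hC1
          apply hne
          intro z hz
          have hz' : ‖z‖ < 1 := mem_ball_zero_iff.mp hz
          have hmz : mob L z ∈ ball (0:ℂ) 1 := mem_ball_zero_iff.mpr (norm_mob_lt_one hLn hz')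
          have h2 := hgeq _ hmz
          rw [hC1, one_mul] at h2
          have h3 : (mob L ∘ (φ ∘ mob L)) (mob L z) = mob L (φ z) := by
            simp only [Function.comp_apply, mob_mob hLn hz'.le]
          rw [h3] at h2
          have h5 := congrArg (mob L) h2
          rw [mob_mob hLn (mem_ball_zero_iff.mp (hm hz)).le, mob_mob hLn hz'.le] at h5
          exact h5
        -- transfer the invariance through the Möbius map
        set μ' := mob L μ with hμ'def
        have hμ'1 : ‖μ'‖ = 1 := norm_mob_eq_one hLn hμeq
        have hμback : mob L μ' = μ := by rw [hμ'def]; exact mob_mob hLn hμ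
        have hKpos : (0:ℝ) < (1 - ‖L‖ ^ 2) / ‖1 - conj' L * μ'‖ ^ 2 := by
          have hd1 : (0:ℝ) < ‖1 - conj' L * μ'‖ := norm_pos_iff.mpr (mob_denom_ne hLn hμ'1.le)
          have hd2 : (0:ℝ) < 1 - ‖L‖ ^ 2 := by nlinarith [norm_nonneg L]
          positivity
        have hkey : ∀ u ∈ ball (0:ℂ) 1, Gfun μ' (C * u) ≤ Gfun μ' u := by
          intro u hu
          have hu' : ‖u‖ < 1 := mem_ball_zero_iff.mp hu
          have hCu : ‖C * u‖ < 1 := by rw [norm_mul, hCnorm, one_mul]; exact hu'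
          have t1 : Gfun μ (mob L u) = Gfun μ' u * ((1 - ‖L‖ ^ 2) / ‖1 - conj' L * μ'‖ ^ 2) := by
            conv_lhs => rw [← hμback]
            exact Gfun_mob hLn hμ'1.le hu'
          have t2 : Gfun μ (mob L (C * u))
              = Gfun μ' (C * u) * ((1 - ‖L‖ ^ 2) / ‖1 - conj' L * μ'‖ ^ 2) := by
            conv_lhs => rw [← hμback]
            exact Gfun_mob hLn hμ'1.le hCu
          have hmem : mob L u ∈ ball (0:ℂ) 1 := mem_ball_zero_iff.mpr (norm_mob_lt_one hLn hu')
          have hφu : φ (mob L u) = mob L (C * u) := by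
            rw [hconj u hu, hgeq u hu]
          have hinvu := hinv (mob L u) hmem
          rw [hφu, t2, t1] at hinvu
          exact le_of_mul_le_mul_right hinvu hKpos
        -- specialize at u = μ'/2 to force C = 1
        have hs : ((1/2 : ℝ) : ℂ) * μ' ∈ ball (0:ℂ) 1 := by
          rw [mem_ball_zero_iff, norm_mul, Complex.norm_real, hμ'1]
          norm_num
        have hk2 := hkey _ hs
        rw [Gfun_scalar hμ'1 (by norm_num) (by norm_num)] at hk2
        have hCu2 : ‖C * (((1/2 : ℝ) : ℂ) * μ')‖ = 1/2 := by
          rw [norm_mul, norm_mul, hCnorm, Complex.norm_real, hμ'1]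
          norm_num
        have hfact : μ' - C * (((1/2 : ℝ) : ℂ) * μ') = (1 - C * ((1/2 : ℝ) : ℂ)) * μ' := by
          ring
        have hLHS : Gfun μ' (C * (((1/2 : ℝ) : ℂ) * μ'))
            = ‖1 - C * ((1/2 : ℝ) : ℂ)‖ ^ 2 / (3/4) := by
          rw [Gfun, hfact, norm_mul, hμ'1, mul_one, hCu2]
          norm_num
        rw [hLHS] at hk2
        have hnC : Complex.normSq C = 1 := by
          rw [← Complex.sq_norm, hCnorm]; norm_num
        have hresq : C.re ^ 2 + C.im ^ 2 = 1 := by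
          rw [Complex.normSq_apply] at hnC; nlinarith [hnC]
        have hexp : ‖1 - C * ((1/2 : ℝ) : ℂ)‖ ^ 2
            = 1 - C.re + (C.re ^ 2 + C.im ^ 2) / 4 := by
          rw [Complex.sq_norm, Complex.normSq_apply]
          simp only [Complex.sub_re, Complex.sub_im, Complex.mul_re, Complex.mul_im,
            Complex.one_re, Complex.one_im, Complex.ofReal_re, Complex.ofReal_im]
          ring
        rw [hexp, hresq] at hk2
        have hCre : C.re = 1 := by nlinarith [hresq, sq_nonneg C.im]
        have hCim : C.im = 0 := by nlinarith [hresq]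
        exact hCne1 (Complex.ext hCre hCim)
      · -- strict case: iterates converge to L, contradiction via horocycles
        push_neg at hex
        have hstrict : ∀ w ∈ ball (0:ℂ) 1, ‖dslope (mob L ∘ (φ ∘ mob L)) 0 w‖ < 1 :=
          fun w hw => lt_of_le_of_ne (hdsb w hw) (hex w hw)
        have horbz : ∀ z ∈ ball (0:ℂ) 1, Tendsto (fun n => φ^[n] z) atTop (𝓝 L) := by
          intro z hz
          have hz' : ‖z‖ < 1 := mem_ball_zero_iff.mp hz
          have hwb : mob L z ∈ ball (0:ℂ) 1 := mem_ball_zero_iff.mpr (norm_mob_lt_one hLn hz')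
          have hgiter : ∀ n : ℕ, φ^[n] z = mob L ((mob L ∘ (φ ∘ mob L))^[n] (mob L z)) := by
            intro n
            induction n with
            | zero => simp [mob_mob hLn hz'.le]
            | succ j ih =>
              rw [Function.iterate_succ_apply', Function.iterate_succ_apply', ih]
              exact hconj _ (iter_mem_ball hgm hwb j)
          have htend0 := iter_tendsto_zero hgd hg0 hstrict hwb
          have htend := ((continuousAt_mob_zero hLn).tendsto.comp htend0)
          rw [mob_zero] at htend
          convert htend using 2 with n
          exact hgiter n
        have hGL : ∀ z ∈ ball (0:ℂ) 1, Gfun μ L ≤ Gfun μ z := by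
          intro z hz
          have h2 : Tendsto (fun n => Gfun μ (φ^[n] z)) atTop (𝓝 (Gfun μ L)) :=
            tendsto_Gfun (horbz z hz) hLn
          exact le_of_tendsto h2 (Filter.Eventually.of_forall
            (fun n => iter_invariance hm hinv n z hz))
        have hδpos : 0 < Gfun μ L := by
          rw [Gfun]
          apply div_pos
          · have hne' : μ ≠ L := by
              intro h; rw [h] at hμeq; exact (ne_of_lt hLn) hμeq
            have := norm_pos_iff.mpr (sub_ne_zero.mpr hne')
            positivity
          · nlinarith [norm_nonneg L]
        obtain ⟨r, hr0, hr1, hrlt⟩ := exists_horocycle_radius hδpos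
        have hzb : ((r : ℝ) : ℂ) * μ ∈ ball (0:ℂ) 1 := by
          rw [mem_ball_zero_iff, norm_mul, Complex.norm_real, hμeq,
            Real.norm_of_nonneg hr0]
          linarith
        have h3 := hGL _ hzb
        rw [Gfun_scalar hμeq hr0 hr1] at h3
        linarith
    · -- constant case is impossible
      exfalso
      have h1 : φ 0 ∈ ball (0:ℂ) 1 := hm (by simp)
      rw [hconst 0 (by simp), mem_ball_zero_iff] at h1
      rw [mem_sphere_zero_iff_norm] at hL
      linarith
    · -- both on the boundary: blowup forces equality
      by_contra hμL
      exact gfun_blowup hm hμeq (mem_sphere_zero_iff_norm.mp hL) hμL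
        (horb 0 (by simp)) hinv

theorem denjoy_wolff_points_converge_aux
    (φseq : ℕ → ℂ → ℂ) (φ : ℂ → ℂ)
    (hφseq : ∀ n, DifferentiableOn ℂ (φseq n) (ball (0:ℂ) 1))
    (hmapsseq : ∀ n, Set.MapsTo (φseq n) (ball (0:ℂ) 1) (ball (0:ℂ) 1))
    (hφ : DifferentiableOn ℂ φ (ball (0:ℂ) 1))
    (hmaps : Set.MapsTo φ (ball (0:ℂ) 1) (ball (0:ℂ) 1))
    (hconv : ∀ z ∈ ball (0:ℂ) 1, Tendsto (fun n => φseq n z) atTop (𝓝 (φ z)))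
    (hne : ¬ ∀ z ∈ ball (0:ℂ) 1, φ z = z)
    (lam : ℕ → ℂ) (hlam : ∀ᶠ n in atTop, IsDWPoint (φseq n) (lam n))
    (lamφ : ℂ) (hlamφ : IsDWPoint φ lamφ) :
    Tendsto lam atTop (𝓝 lamφ) := by
  apply (isCompact_closedBall (0:ℂ) 1).tendsto_nhds_of_unique_mapClusterPt
  · filter_upwards [hlam] with n hn
    exact dw_mem_closedBall hn
  · intro μ hμ hcluster
    obtain ⟨ψ, hψmono, hψtend⟩ :=
      TopologicalSpace.FirstCountableTopology.tendsto_subseq hcluster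
    have hinv : ∀ z ∈ ball (0:ℂ) 1, Gfun μ (φ z) ≤ Gfun μ z := by
      intro z hz
      have hz' : ‖z‖ < 1 := mem_ball_zero_iff.mp hz
      have hφz : ‖φ z‖ < 1 := mem_ball_zero_iff.mp (hmaps hz)
      obtain ⟨N, hN⟩ := eventually_atTop.mp hlam
      have hev : ∀ᶠ k in atTop, Gfun (lam (ψ k)) (φseq (ψ k) z) ≤ Gfun (lam (ψ k)) z := by
        filter_upwards [hψmono.tendsto_atTop.eventually_ge_atTop N] with k hk
        exact dw_invariance (hφseq _) (hmapsseq _) (hN _ hk) z hz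
      have htf : Tendsto (fun k => φseq (ψ k) z) atTop (𝓝 (φ z)) :=
        (hconv z hz).comp hψmono.tendsto_atTop
      have hl1 : Tendsto (fun k => Gfun (lam (ψ k)) (φseq (ψ k) z)) atTop
          (𝓝 (Gfun μ (φ z))) := by
        simp only [Gfun]
        apply Tendsto.div
        · exact ((hψtend.sub htf).norm).pow 2
        · exact tendsto_const_nhds.sub ((htf.norm).pow 2)
        · nlinarith [norm_nonneg (φ z)]
      have hl2 : Tendsto (fun k => Gfun (lam (ψ k)) z) atTop (𝓝 (Gfun μ z)) := by
        simp only [Gfun]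
        apply Tendsto.div
        · exact ((hψtend.sub tendsto_const_nhds).norm).pow 2
        · exact tendsto_const_nhds
        · nlinarith [norm_nonneg z]
      exact le_of_tendsto_of_tendsto hl1 hl2 hev
    exact dw_unique hφ hmaps hne hlamφ hμ hinv

end DWaux

/-- Heins' theorem: if analytic self-maps φₙ of 𝔻 converge pointwise to an analytic
φ : 𝔻 → 𝔻 which is not the identity, then the Denjoy–Wolff points of φₙ converge to
the Denjoy–Wolff point of φ. -/
theorem denjoy_wolff_points_converge
    (φseq : ℕ → ℂ → ℂ) (φ : ℂ → ℂ)
    (hφseq : ∀ n, DifferentiableOn ℂ (φseq n) (ball (0:ℂ) 1))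
    (hmapsseq : ∀ n, Set.MapsTo (φseq n) (ball (0:ℂ) 1) (ball (0:ℂ) 1))
    (hφ : DifferentiableOn ℂ φ (ball (0:ℂ) 1))
    (hmaps : Set.MapsTo φ (ball (0:ℂ) 1) (ball (0:ℂ) 1))
    (hconv : ∀ z ∈ ball (0:ℂ) 1, Tendsto (fun n => φseq n z) atTop (𝓝 (φ z)))
    (hne : ¬ ∀ z ∈ ball (0:ℂ) 1, φ z = z)
    (lam : ℕ → ℂ) (hlam : ∀ᶠ n in atTop, IsDWPoint (φseq n) (lam n))
    (lamφ : ℂ) (hlamφ : IsDWPoint φ lamφ) :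
    Tendsto lam atTop (𝓝 lamφ) :=
  denjoy_wolff_points_converge_aux φseq φ hφseq hmapsseq hφ hmaps hconv hne lam hlam lamφ hlamφ
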